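/- Let C be a monoidal category and suppose x and y are objects each equipped with a Frobenius monoid structure: morphisms μ_x : x ⊗ x → x, ι_x : 𝟙 → x, δ_x : x → x ⊗ x, ε_x : x → 𝟙 satisfying the associativity and unit laws for a monoid, the coassociativity and counit laws for a comonoid, and the Frobenius law (x ⊗ μ) ∘ (associator) ∘ (δ ⊗ x) = δ ∘ μ = (μ ⊗ x) ∘ (inverse associator) ∘ (x ⊗ δ), and similarly for y. If f : x → y is a morphism preserving all four structure maps (f ∘ μ_x = μ_y ∘ (f ⊗ f), f ∘ ι_x = ι_y, δ_y ∘ f = (f ⊗ f) ∘ δ_x, ε_y ∘ f = ε_x), then f is an isomorphism. -/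

import Mathlib

open CategoryTheory MonoidalCategory

/-- A Frobenius monoid structure on an object `x` of a monoidal category:
a monoid structure `(mul, one)`, a comonoid structure `(comul, counit)`,
and the Frobenius law relating them. -/
structure FrobeniusStructure {C : Type*} [Category C] [MonoidalCategory C]
    (x : C) where
  mul : x ⊗ x ⟶ x
  one : 𝟙_ C ⟶ x
  comul : x ⟶ x ⊗ x
  counit : x ⟶ 𝟙_ C
  mul_assoc : (mul ▷ x) ≫ mul = (α_ x x x).hom ≫ (x ◁ mul) ≫ mul
  one_mul : (one ▷ x) ≫ mul = (λ_ x).hom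
  mul_one : (x ◁ one) ≫ mul = (ρ_ x).hom
  comul_assoc : comul ≫ (comul ▷ x) ≫ (α_ x x x).hom = comul ≫ (x ◁ comul)
  counit_comul : comul ≫ (counit ▷ x) = (λ_ x).inv
  comul_counit : comul ≫ (x ◁ counit) = (ρ_ x).inv
  frobenius_left : (comul ▷ x) ≫ (α_ x x x).hom ≫ (x ◁ mul) = mul ≫ comul
  frobenius_right : (x ◁ comul) ≫ (α_ x x x).inv ≫ (mul ▷ x) = mul ≫ comul

/-- The snake identity for a Frobenius structure. -/
lemma frobenius_snake {C : Type*} [Category C] [MonoidalCategory C]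
    {x : C} (F : FrobeniusStructure x) :
    (λ_ x).inv ≫ ((F.one ≫ F.comul) ▷ x) ≫ (α_ x x x).hom ≫
      (x ◁ (F.mul ≫ F.counit)) ≫ (ρ_ x).hom = 𝟙 x := by
  rw [comp_whiskerRight, MonoidalCategory.whiskerLeft_comp]
  slice_lhs 3 5 => rw [F.frobenius_left]
  slice_lhs 4 5 => rw [F.comul_counit]
  slice_lhs 2 3 => rw [F.one_mul]
  simp

/-- Any morphism of Frobenius monoids — a morphism preserving the
multiplication, unit, comultiplication and counit — is an isomorphism. -/
theorem frobenius_monoid_hom_isIso {C : Type*} [Category C] [MonoidalCategory C]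
    {x y : C} (Fx : FrobeniusStructure x) (Fy : FrobeniusStructure y)
    (f : x ⟶ y)
    (hmul : (f ⊗ₘ f) ≫ Fy.mul = Fx.mul ≫ f)
    (hone : Fx.one ≫ f = Fy.one)
    (hcomul : f ≫ Fy.comul = Fx.comul ≫ (f ⊗ₘ f))
    (hcounit : f ≫ Fy.counit = Fx.counit) :
    IsIso f := by
  set η : 𝟙_ C ⟶ x ⊗ x := Fx.one ≫ Fx.comul with hη
  set ε : y ⊗ y ⟶ 𝟙_ C := Fy.mul ≫ Fy.counit with hε
  have hηf : η ≫ (f ⊗ₘ f) = Fy.one ≫ Fy.comul := by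
    rw [hη, Category.assoc, ← hcomul, ← Category.assoc, hone]
  have hεf : (f ⊗ₘ f) ≫ ε = Fx.mul ≫ Fx.counit := by
    rw [hε, ← Category.assoc, hmul, Category.assoc, hcounit]
  refine ⟨(λ_ y).inv ≫ (η ▷ y) ≫ (α_ x x y).hom ≫ (x ◁ (f ▷ y)) ≫ (x ◁ ε) ≫
    (ρ_ x).hom, ?_, ?_⟩
  · -- f ≫ g = 𝟙 x
    have := frobenius_snake Fx
    calc f ≫ (λ_ y).inv ≫ (η ▷ y) ≫ (α_ x x y).hom ≫ (x ◁ (f ▷ y)) ≫ (x ◁ ε) ≫ (ρ_ x).hom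
        = (λ_ x).inv ≫ (𝟙_ C ◁ f) ≫ (η ▷ y) ≫ (α_ x x y).hom ≫ (x ◁ (f ▷ y)) ≫
            (x ◁ ε) ≫ (ρ_ x).hom := by
          rw [leftUnitor_inv_naturality_assoc]
      _ = (λ_ x).inv ≫ (η ▷ x) ≫ ((x ⊗ x) ◁ f) ≫ (α_ x x y).hom ≫ (x ◁ (f ▷ y)) ≫
            (x ◁ ε) ≫ (ρ_ x).hom := by
          rw [← whisker_exchange_assoc]
      _ = (λ_ x).inv ≫ (η ▷ x) ≫ (α_ x x x).hom ≫ (x ◁ (x ◁ f)) ≫ (x ◁ (f ▷ y)) ≫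
            (x ◁ ε) ≫ (ρ_ x).hom := by
          rw [associator_naturality_right_assoc]
      _ = (λ_ x).inv ≫ (η ▷ x) ≫ (α_ x x x).hom ≫ (x ◁ ((f ⊗ₘ f) ≫ ε)) ≫ (ρ_ x).hom := by
          simp only [tensorHom_def', MonoidalCategory.whiskerLeft_comp, Category.assoc]
      _ = 𝟙 x := by rw [hεf, ← frobenius_snake Fx]
  · -- g ≫ f = 𝟙 y
    calc ((λ_ y).inv ≫ (η ▷ y) ≫ (α_ x x y).hom ≫ (x ◁ (f ▷ y)) ≫ (x ◁ ε) ≫ (ρ_ x).hom) ≫ f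
        = (λ_ y).inv ≫ (η ▷ y) ≫ (α_ x x y).hom ≫ (x ◁ (f ▷ y)) ≫ (x ◁ ε) ≫
            (f ▷ 𝟙_ C) ≫ (ρ_ y).hom := by
          simp only [Category.assoc, rightUnitor_naturality]
      _ = (λ_ y).inv ≫ (η ▷ y) ≫ (α_ x x y).hom ≫ (x ◁ (f ▷ y)) ≫ (f ▷ (y ⊗ y)) ≫
            (y ◁ ε) ≫ (ρ_ y).hom := by
          rw [whisker_exchange_assoc]
      _ = (λ_ y).inv ≫ (η ▷ y) ≫ (α_ x x y).hom ≫ (f ▷ (x ⊗ y)) ≫ (y ◁ (f ▷ y)) ≫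
            (y ◁ ε) ≫ (ρ_ y).hom := by
          rw [whisker_exchange_assoc]
      _ = (λ_ y).inv ≫ (η ▷ y) ≫ ((f ▷ x) ▷ y) ≫ (α_ y x y).hom ≫ (y ◁ (f ▷ y)) ≫
            (y ◁ ε) ≫ (ρ_ y).hom := by
          rw [← associator_naturality_left_assoc]
      _ = (λ_ y).inv ≫ (η ▷ y) ≫ ((f ▷ x) ▷ y) ≫ ((y ◁ f) ▷ y) ≫ (α_ y y y).hom ≫
            (y ◁ ε) ≫ (ρ_ y).hom := by
          rw [associator_naturality_middle_assoc]
      _ = (λ_ y).inv ≫ (((η ≫ (f ⊗ₘ f)) ▷ y)) ≫ (α_ y y y).hom ≫ (y ◁ ε) ≫ (ρ_ y).hom := by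
          simp only [MonoidalCategory.tensorHom_def, comp_whiskerRight, Category.assoc]
      _ = 𝟙 y := by rw [hηf, ← frobenius_snake Fy]
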